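/- (Rule 3, full version) In an info-causal DAG with pairwise disjoint node sets A, B, C, D, write C₁ = C ∩ anc(D) and C₂ = C \ anc(D). If B is d-separated from C given D in the graph obtained from G^{σ(x̃_A)} by deleting all edges into C₂, then P(x_B | σ(x̃_A), σ(x̃_C), x_D) = P(x_B | σ(x̃_A), x_D). -/

import Mathlib

open Finset

/-- The info-intervention distribution `P(x | σ(x̃_A)) = ∏_{k∈V} P(x_k | x*_{pa(k)})`,
where the kernel `q v a x` stands for `P(x_v = a | x_{pa(v)})` (depending only on the
parent coordinates of `x`), and `x*_j = x̃_j` if `j ∈ A`, else `x_j`. -/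
noncomputable def infoDist {V Ω : Type*} [Fintype V] [DecidableEq V]
    (q : V → Ω → (V → Ω) → ℝ) (A : Finset V) (xt : V → Ω) (x : V → Ω) : ℝ :=
  ∏ v : V, q v (x v) (fun j => if j ∈ A then xt j else x j)

/-- Marginal of a (discrete) distribution `p` on the coordinates in `S`, evaluated at `y`. -/
noncomputable def Marg {V Ω : Type*} [Fintype V] [DecidableEq V] [Fintype Ω] [DecidableEq Ω]
    (p : (V → Ω) → ℝ) (S : Finset V) (y : V → Ω) : ℝ :=
  ∑ x : V → Ω, if ∀ i ∈ S, x i = y i then p x else 0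

/-- `b` is a collider on a path segment `a — b — c` for edge relation `E`:
both edges point into `b`. -/
def IsCollider {V : Type*} (E : V → V → Prop) (a b c : V) : Prop := E a b ∧ E c b

/-- The walk `f` (a sequence of vertices, consecutive ones adjacent in either direction)
is blocked at internal position `i` by the conditioning set `Z`: either `f i` is a
non-collider lying in `Z`, or `f i` is a collider such that neither it nor any of its
descendants lies in `Z`. -/
def BlockedAt {V : Type*} (E : V → V → Prop) (Z : Set V) (f : ℕ → V) (i : ℕ) : Prop :=
  (¬ IsCollider E (f (i - 1)) (f i) (f (i + 1)) ∧ f i ∈ Z) ∨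
  (IsCollider E (f (i - 1)) (f i) (f (i + 1)) ∧ f i ∉ Z ∧
    ∀ z ∈ Z, ¬ Relation.TransGen E (f i) z)

/-- d-separation: every walk from `B` to `C` (consecutive vertices adjacent in `E` in
either direction) is blocked by `Z` at some internal position. -/
def dSep {V : Type*} (E : V → V → Prop) (B C Z : Set V) : Prop :=
  ∀ (n : ℕ) (f : ℕ → V), f 0 ∈ B → f n ∈ C →
    (∀ i < n, E (f i) (f (i + 1)) ∨ E (f (i + 1)) (f i)) →
    ∃ i, 0 < i ∧ i < n ∧ BlockedAt E Z f i

/-- Conditional independence of the coordinate sets `S` and `T` given `W` under the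
(discrete) distribution `p`: `P(x_S, x_T, x_W) P(x_W) = P(x_S, x_W) P(x_T, x_W)`. -/
noncomputable def CondIndep {V Ω : Type*} [Fintype V] [DecidableEq V] [Fintype Ω]
    [DecidableEq Ω] (p : (V → Ω) → ℝ) (S T W : Finset V) : Prop :=
  ∀ y : V → Ω, Marg p (S ∪ T ∪ W) y * Marg p W y = Marg p (S ∪ W) y * Marg p (T ∪ W) y

namespace InfoRule3Aux

set_option linter.unusedSectionVars false

variable {V Ω : Type*} [Fintype V] [DecidableEq V] [Fintype Ω] [DecidableEq Ω]

/-- Parent-substitution array used by `infoDist`. -/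
def sub (Z : Finset V) (xt x : V → Ω) : V → Ω := fun j => if j ∈ Z then xt j else x j

lemma sum_update_eq (u : V) (c : Ω) (F : (V → Ω) → ℝ) :
    ∑ x : V → Ω, F x =
      ∑ x : V → Ω, if x u = c then ∑ a : Ω, F (Function.update x u a) else 0 := by
  have hinv : Function.Involutive
      (fun p : (V → Ω) × Ω => (Function.update p.1 u p.2, p.1 u)) := by
    rintro ⟨x, a⟩
    simp [Function.update_idem, Function.update_self, Function.update_eq_self]
  let e := hinv.toPerm
  calc ∑ x : V → Ω, F x
      = ∑ p : (V → Ω) × Ω, if p.2 = c then F p.1 else 0 := by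
        rw [Fintype.sum_prod_type]
        refine Finset.sum_congr rfl fun x _ => ?_
        simp
    _ = ∑ p : (V → Ω) × Ω, if (e p).2 = c then F (e p).1 else 0 :=
        (Equiv.sum_comp e (fun p => if p.2 = c then F p.1 else 0)).symm
    _ = ∑ x : V → Ω, if x u = c then ∑ a : Ω, F (Function.update x u a) else 0 := by
        rw [Fintype.sum_prod_type]
        refine Finset.sum_congr rfl fun x _ => ?_
        by_cases h : x u = c
        · rw [if_pos h]
          refine Finset.sum_congr rfl fun a _ => ?_
          simp [e, Function.Involutive.coe_toPerm, h]
        · simp [e, Function.Involutive.coe_toPerm, h]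

/-- Partially truncated sum: coordinates outside `U` are pinned to `y`, only kernels in
`U` are multiplied. -/
noncomputable def Phi (q : V → Ω → (V → Ω) → ℝ) (Z S U : Finset V) (xt y : V → Ω) : ℝ :=
  ∑ x : V → Ω, if (∀ i ∈ S, x i = y i) ∧ (∀ i, i ∉ U → x i = y i)
    then ∏ v ∈ U, q v (x v) (sub Z xt x) else 0

lemma Phi_univ (q : V → Ω → (V → Ω) → ℝ) (Z S : Finset V) (xt y : V → Ω) :
    Phi q Z S Finset.univ xt y = Marg (infoDist q Z xt) S y := by
  unfold Phi Marg infoDist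
  refine Finset.sum_congr rfl fun x _ => ?_
  have h : ((∀ i ∈ S, x i = y i) ∧ (∀ i, i ∉ (Finset.univ : Finset V) → x i = y i))
      ↔ (∀ i ∈ S, x i = y i) := by simp
  rw [if_congr h rfl rfl]
  rfl

lemma Phi_step (pa : V → Finset V) (q : V → Ω → (V → Ω) → ℝ) (xt y : V → Ω)
    (hloc : ∀ v a (x w : V → Ω), (∀ j ∈ pa v, x j = w j) → q v a x = q v a w)
    (hnorm : ∀ v x, ∑ a : Ω, q v a x = 1)
    (Z S U : Finset V) (u : V) (huU : u ∈ U) (huS : u ∉ S)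
    (hupa : u ∉ pa u)
    (hnodep : ∀ v ∈ U, v ≠ u → u ∈ pa v → u ∈ Z) :
    Phi q Z S U xt y = Phi q Z S (U.erase u) xt y := by
  unfold Phi
  rw [sum_update_eq u (y u)]
  refine Finset.sum_congr rfl fun x _ => ?_
  by_cases hxu : x u = y u
  · rw [if_pos hxu]
    have key : ∀ (a : Ω) (i : V), i ≠ u → Function.update x u a i = x i :=
      fun a i hi => Function.update_of_ne hi _ _
    have hP : ∀ a : Ω,
        ((∀ i ∈ S, Function.update x u a i = y i) ∧
          (∀ i, i ∉ U → Function.update x u a i = y i))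
          ↔ ((∀ i ∈ S, x i = y i) ∧ (∀ i, i ∉ U → x i = y i)) := by
      intro a
      constructor
      · rintro ⟨h1, h2⟩
        refine ⟨fun i hi => ?_, fun i hi => ?_⟩
        · rw [← key a i (by rintro rfl; exact huS hi)]; exact h1 i hi
        · rw [← key a i (by rintro rfl; exact hi huU)]; exact h2 i hi
      · rintro ⟨h1, h2⟩
        refine ⟨fun i hi => ?_, fun i hi => ?_⟩
        · rw [key a i (by rintro rfl; exact huS hi)]; exact h1 i hi
        · rw [key a i (by rintro rfl; exact hi huU)]; exact h2 i hi
    have hsum : (∑ a : Ω, if (∀ i ∈ S, Function.update x u a i = y i) ∧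
          (∀ i, i ∉ U → Function.update x u a i = y i)
          then ∏ v ∈ U, q v (Function.update x u a v) (sub Z xt (Function.update x u a)) else 0)
        = if (∀ i ∈ S, x i = y i) ∧ (∀ i, i ∉ U → x i = y i)
          then ∏ v ∈ U.erase u, q v (x v) (sub Z xt x) else 0 := by
      by_cases hPx : (∀ i ∈ S, x i = y i) ∧ (∀ i, i ∉ U → x i = y i)
      · have hprod : ∀ a : Ω,
            ∏ v ∈ U, q v (Function.update x u a v) (sub Z xt (Function.update x u a))
              = q u a (sub Z xt x) * ∏ v ∈ U.erase u, q v (x v) (sub Z xt x) := by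
          intro a
          rw [← Finset.mul_prod_erase _ _ huU]
          congr 1
          · rw [Function.update_self]
            refine hloc u a _ _ (fun j hj => ?_)
            unfold sub
            by_cases hjZ : j ∈ Z
            · simp [hjZ]
            · simp only [if_neg hjZ]
              exact Function.update_of_ne (fun h => hupa (by rwa [h] at hj)) _ _
          · refine Finset.prod_congr rfl fun v hv => ?_
            have hvu : v ≠ u := (Finset.mem_erase.mp hv).1
            rw [key a v hvu]
            refine hloc v _ _ _ (fun j hj => ?_)
            unfold sub
            by_cases hjZ : j ∈ Z
            · simp [hjZ]
            · simp only [if_neg hjZ]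
              refine Function.update_of_ne (fun h => ?_) _ _
              subst h
              exact hjZ (hnodep v (Finset.mem_of_mem_erase hv) hvu hj)
        calc (∑ a : Ω, if (∀ i ∈ S, Function.update x u a i = y i) ∧
              (∀ i, i ∉ U → Function.update x u a i = y i)
              then ∏ v ∈ U, q v (Function.update x u a v) (sub Z xt (Function.update x u a)) else 0)
            = ∑ a : Ω, q u a (sub Z xt x) * ∏ v ∈ U.erase u, q v (x v) (sub Z xt x) := by
              refine Finset.sum_congr rfl fun a _ => ?_
              rw [if_pos ((hP a).mpr hPx), hprod a]
          _ = (∑ a : Ω, q u a (sub Z xt x)) * ∏ v ∈ U.erase u, q v (x v) (sub Z xt x) := by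
              rw [Finset.sum_mul]
          _ = ∏ v ∈ U.erase u, q v (x v) (sub Z xt x) := by rw [hnorm, one_mul]
          _ = _ := by rw [if_pos hPx]
      · rw [if_neg hPx]
        refine Finset.sum_eq_zero fun a _ => ?_
        rw [if_neg (fun h => hPx ((hP a).mp h))]
    rw [hsum]
    refine if_congr ⟨?_, ?_⟩ rfl rfl
    · rintro ⟨h1, h2⟩
      refine ⟨h1, fun i hi => ?_⟩
      by_cases hiu : i = u
      · subst hiu; exact hxu
      · exact h2 i (fun hmem => hi (Finset.mem_erase.mpr ⟨hiu, hmem⟩))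
    · rintro ⟨h1, h2⟩
      exact ⟨h1, fun i hi => h2 i (fun hmem => hi (Finset.mem_of_mem_erase hmem))⟩
  · rw [if_neg hxu, if_neg]
    rintro ⟨-, h2⟩
    exact hxu (h2 u (Finset.notMem_erase u U))

lemma exists_max (pa : V → Finset V)
    (hacyc : ∀ v, ¬ Relation.TransGen (fun u w : V => u ∈ pa w) v v) :
    ∀ (s : Finset V), s.Nonempty →
      ∃ u ∈ s, ∀ w ∈ s, ¬ Relation.TransGen (fun u w : V => u ∈ pa w) u w := by
  classical
  intro s
  induction s using Finset.strongInduction with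
  | _ s ih =>
    intro hs
    obtain ⟨a, ha⟩ := hs
    by_cases h : ∀ w ∈ s, ¬ Relation.TransGen (fun u w : V => u ∈ pa w) a w
    · exact ⟨a, ha, h⟩
    · push_neg at h
      obtain ⟨b, hb, htg⟩ := h
      have hss : s.filter (fun w => Relation.TransGen (fun u w : V => u ∈ pa w) a w) ⊂ s :=
        Finset.filter_ssubset.mpr ⟨a, ha, hacyc a⟩
      obtain ⟨u, hu, hmax⟩ := ih _ hss ⟨b, Finset.mem_filter.mpr ⟨hb, htg⟩⟩
      refine ⟨u, (Finset.mem_filter.mp hu).1, fun w hw htg' => ?_⟩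
      exact hmax w (Finset.mem_filter.mpr ⟨hw, ((Finset.mem_filter.mp hu).2).trans htg'⟩) htg'

lemma Phi_descend (pa : V → Finset V) (q : V → Ω → (V → Ω) → ℝ) (xt y : V → Ω)
    (hloc : ∀ v a (x w : V → Ω), (∀ j ∈ pa v, x j = w j) → q v a x = q v a w)
    (hnorm : ∀ v x, ∑ a : Ω, q v a x = 1)
    (hacyc : ∀ v, ¬ Relation.TransGen (fun u w : V => u ∈ pa w) v v)
    (Z S T : Finset V) (hST : S ⊆ T)
    (hclose : ∀ v ∈ T, ∀ j ∈ pa v, j ∉ Z → j ∈ T) :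
    ∀ (U : Finset V), T ⊆ U → Phi q Z S U xt y = Phi q Z S T xt y := by
  suffices H : ∀ (n : ℕ) (U : Finset V), U.card = n → T ⊆ U →
      Phi q Z S U xt y = Phi q Z S T xt y from fun U hU => H U.card U rfl hU
  intro n
  induction n using Nat.strong_induction_on with
  | _ n ih =>
    intro U hcard hTU
    by_cases hUT : U = T
    · rw [hUT]
    · have hne : (U \ T).Nonempty := by
        rw [Finset.sdiff_nonempty]
        exact fun hsub => hUT (Finset.Subset.antisymm hsub hTU)
      obtain ⟨u, hu, hmax⟩ := exists_max pa hacyc _ hne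
      have huU : u ∈ U := (Finset.mem_sdiff.mp hu).1
      have huT : u ∉ T := (Finset.mem_sdiff.mp hu).2
      have hstep := Phi_step pa q xt y hloc hnorm Z S U u huU (fun hS => huT (hST hS))
        (fun hpa => hacyc u (Relation.TransGen.single hpa))
        (fun v hv hvu hpv => by
          by_contra hZ
          by_cases hvT : v ∈ T
          · exact huT (hclose v hvT u hpv hZ)
          · exact hmax v (Finset.mem_sdiff.mpr ⟨hv, hvT⟩) (Relation.TransGen.single hpv))
      rw [hstep]
      exact ih (U.erase u).card
        (by rw [← hcard]; exact Finset.card_lt_card (Finset.erase_ssubset huU))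
        _ rfl (Finset.subset_erase.mpr ⟨hTU, huT⟩)

lemma marg_eq_of (pa : V → Finset V) (q : V → Ω → (V → Ω) → ℝ) (xt y : V → Ω)
    (hloc : ∀ v a (x w : V → Ω), (∀ j ∈ pa v, x j = w j) → q v a x = q v a w)
    (hnorm : ∀ v x, ∑ a : Ω, q v a x = 1)
    (hacyc : ∀ v, ¬ Relation.TransGen (fun u w : V => u ∈ pa w) v v)
    (Z Z' S T : Finset V) (hST : S ⊆ T)
    (hclose : ∀ v ∈ T, ∀ j ∈ pa v, j ∉ Z → j ∈ T)
    (hagree : ∀ v ∈ T, ∀ j ∈ pa v, (j ∈ Z ↔ j ∈ Z')) :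
    Marg (infoDist q Z xt) S y = Marg (infoDist q Z' xt) S y := by
  have hclose' : ∀ v ∈ T, ∀ j ∈ pa v, j ∉ Z' → j ∈ T := fun v hv j hj hjZ =>
    hclose v hv j hj (fun h => hjZ ((hagree v hv j hj).mp h))
  rw [← Phi_univ, ← Phi_univ,
      Phi_descend pa q xt y hloc hnorm hacyc Z S T hST hclose Finset.univ (Finset.subset_univ T),
      Phi_descend pa q xt y hloc hnorm hacyc Z' S T hST hclose' Finset.univ (Finset.subset_univ T)]
  unfold Phi
  refine Finset.sum_congr rfl fun x _ => ?_
  refine if_congr Iff.rfl (Finset.prod_congr rfl fun v hv => ?_) rfl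
  refine hloc v _ _ _ (fun j hj => ?_)
  unfold sub
  by_cases hjZ : j ∈ Z
  · rw [if_pos hjZ, if_pos ((hagree v hv j hj).mp hjZ)]
  · rw [if_neg hjZ, if_neg (fun h => hjZ ((hagree v hv j hj).mpr h))]

lemma Marg_congr_point (p : (V → Ω) → ℝ) (S : Finset V) {y y' : V → Ω}
    (h : ∀ i ∈ S, y i = y' i) : Marg p S y = Marg p S y' := by
  unfold Marg
  refine Finset.sum_congr rfl fun x _ => ?_
  refine if_congr ⟨fun hx i hi => (hx i hi).trans (h i hi),
    fun hx i hi => (hx i hi).trans (h i hi).symm⟩ rfl rfl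

lemma Marg_congr_event (p p' : (V → Ω) → ℝ) (S : Finset V) (y : V → Ω)
    (h : ∀ x, (∀ i ∈ S, x i = y i) → p x = p' x) : Marg p S y = Marg p' S y := by
  unfold Marg
  refine Finset.sum_congr rfl fun x _ => ?_
  by_cases hx : ∀ i ∈ S, x i = y i
  · rw [if_pos hx, if_pos hx, h x hx]
  · rw [if_neg hx, if_neg hx]

lemma path_tg (E : V → V → Prop) (f : ℕ → V) :
    ∀ m, 0 < m → (∀ i < m, E (f i) (f (i + 1))) → Relation.TransGen E (f 0) (f m) := by
  intro m
  induction m with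
  | zero => omega
  | succ m ih =>
    intro _ he
    rcases Nat.eq_zero_or_pos m with hm | hm
    · subst hm; exact Relation.TransGen.single (he 0 (by omega))
    · exact (ih hm (fun i hi => he i (by omega))).tail (he m (by omega))

lemma tg_path (E : V → V → Prop) {c b : V} (h : Relation.TransGen E c b) :
    ∃ n : ℕ, ∃ f : ℕ → V, 0 < n ∧ f 0 = c ∧ f n = b ∧ ∀ i < n, E (f i) (f (i + 1)) := by
  refine Relation.TransGen.head_induction_on
    (motive := fun a _ => ∃ n : ℕ, ∃ f : ℕ → V, 0 < n ∧ f 0 = a ∧ f n = b ∧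
      ∀ i < n, E (f i) (f (i + 1))) h ?_ ?_
  · intro a h
    refine ⟨1, fun i => if i = 0 then a else b, by omega, by simp, by simp, fun i hi => ?_⟩
    have hi0 : i = 0 := by omega
    subst hi0; simpa using h
  · rintro a a' h' htg ⟨n, f, hn, h0, hb, he⟩
    refine ⟨n + 1, fun i => if i = 0 then a else f (i - 1), by omega, by simp, ?_, ?_⟩
    · simp only [if_neg (by omega : ¬ n + 1 = 0)]
      simpa using hb
    · intro i hi
      by_cases hi0 : i = 0
      · subst hi0
        simp only [if_pos rfl, if_neg (by omega : ¬ (1 : ℕ) = 0)]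
        simpa [h0] using h'
      · simp only [if_neg hi0, if_neg (by omega : ¬ i + 1 = 0)]
        have h2 : i - 1 + 1 = i := by omega
        have h3 : i + 1 - 1 = i := by omega
        rw [h3]
        have := he (i - 1) (by omega)
        rwa [h2] at this

lemma dSep_anti (pa : V → Finset V)
    (hacyc : ∀ v, ¬ Relation.TransGen (fun u w : V => u ∈ pa w) v v)
    (E E' : V → V → Prop) (hsub : ∀ u v, E u v → E' u v)
    (hpa : ∀ u v, E' u v → u ∈ pa v) {X Y Z : Set V}
    (h : dSep E' X Y Z) : dSep E X Y Z := by
  intro n f h0 hn hw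
  obtain ⟨i, hi0, hin, hbl⟩ := h n f h0 hn (fun i hi => (hw i hi).imp (hsub _ _) (hsub _ _))
  refine ⟨i, hi0, hin, ?_⟩
  rcases hbl with ⟨hnc, hz⟩ | ⟨hc, hz, hdesc⟩
  · exact Or.inl ⟨fun hcol => hnc ⟨hsub _ _ hcol.1, hsub _ _ hcol.2⟩, hz⟩
  · refine Or.inr ⟨⟨?_, ?_⟩, hz, fun z hz' ht => hdesc z hz' (Relation.TransGen.mono hsub _ _ ht)⟩
    · rcases hw (i - 1) (by omega) with h' | h'
      · rwa [show i - 1 + 1 = i by omega] at h'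
      · rw [show i - 1 + 1 = i by omega] at h'
        exact absurd (Relation.TransGen.head (hpa _ _ (hsub _ _ h'))
          (Relation.TransGen.single (hpa _ _ hc.1))) (hacyc _)
    · rcases hw i hin with h' | h'
      · exact absurd (Relation.TransGen.head (hpa _ _ (hsub _ _ h'))
          (Relation.TransGen.single (hpa _ _ hc.2))) (hacyc _)
      · exact h'

end InfoRule3Aux

open InfoRule3Aux in
theorem info_rule3_full {V Ω : Type*} [Fintype V] [DecidableEq V]
    [Fintype Ω] [DecidableEq Ω]
    (pa : V → Finset V) (q : V → Ω → (V → Ω) → ℝ) (P : (V → Ω) → ℝ)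
    (hloc : ∀ v a (x y : V → Ω), (∀ j ∈ pa v, x j = y j) → q v a x = q v a y)
    (hq0 : ∀ v a x, 0 ≤ q v a x) (hnorm : ∀ v x, ∑ a : Ω, q v a x = 1)
    (hfact : ∀ x, P x = ∏ v : V, q v (x v) x)
    (hacyc : ∀ v, ¬ Relation.TransGen (fun u w : V => u ∈ pa w) v v)
    (A B C D : Finset V)
    (hAB : Disjoint A B) (hAC : Disjoint A C) (hAD : Disjoint A D)
    (hBC : Disjoint B C) (hBD : Disjoint B D) (hCD : Disjoint C D)
    (ancD : Finset V)
    (hanc : ∀ v, v ∈ ancD ↔ ∃ d ∈ D, Relation.TransGen (fun u w : V => u ∈ pa w) v d)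
    (xt : V → Ω)
    (hMarkov : ∀ (A' : Finset V) (S T W : Finset V),
      dSep (fun u v => u ∈ pa v ∧ u ∉ A') (S : Set V) (T : Set V) (W : Set V) →
        CondIndep (infoDist q A' xt) S T W)
    (hd : dSep (fun u v => (u ∈ pa v ∧ u ∉ A) ∧ v ∉ C \ ancD)
            (B : Set V) (C : Set V) (D : Set V))
    (y : V → Ω)
    (hpos1 : Marg (infoDist q (A ∪ C) xt) D y ≠ 0)
    (hpos2 : Marg (infoDist q A xt) D y ≠ 0)
    (hpos3 : Marg (infoDist q A xt)
        ((C ∩ ancD) ∪ D) (fun j => if j ∈ C ∩ ancD then xt j else y j) ≠ 0) :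
    Marg (infoDist q (A ∪ C) xt) (B ∪ D) y / Marg (infoDist q (A ∪ C) xt) D y
      = Marg (infoDist q A xt) (B ∪ D) y / Marg (infoDist q A xt) D y := by
  classical
  -- (b): no causal path (in G^{σ(x̃_A)}) from C₂ = C \ ancD to B
  have nopath : ∀ n : ℕ, ∀ f : ℕ → V, f 0 ∈ C \ ancD → f n ∈ B →
      (∀ i < n, f i ∈ pa (f (i + 1)) ∧ f i ∉ A) → False := by
    intro n
    induction n using Nat.strong_induction_on with
    | _ n ih =>
      intro f hf0 hfn he
      rcases Nat.eq_zero_or_pos n with hn0 | hn0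
      · subst hn0
        exact Finset.disjoint_left.mp hBC hfn (Finset.mem_sdiff.mp hf0).1
      by_cases hmid : ∃ j, 0 < j ∧ j ≤ n ∧ f j ∈ C \ ancD
      · obtain ⟨j, hj0, hjn, hjC⟩ := hmid
        have hjn' : j < n := lt_of_le_of_ne hjn (by
          rintro rfl
          exact Finset.disjoint_left.mp hBC hfn (Finset.mem_sdiff.mp hjC).1)
        refine ih (n - j) (by omega) (fun i => f (j + i)) (by simpa using hjC)
          (by show f (j + (n - j)) ∈ B; rw [show j + (n - j) = n by omega]; exact hfn) ?_
        intro i hi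
        show f (j + i) ∈ pa (f (j + (i + 1))) ∧ f (j + i) ∉ A
        have h1 : j + (i + 1) = (j + i) + 1 := by omega
        rw [h1]
        exact he (j + i) (by omega)
      · push_neg at hmid
        have hwalk : ∀ i < n,
            (((f (n - i) ∈ pa (f (n - (i + 1))) ∧ f (n - i) ∉ A) ∧ f (n - (i + 1)) ∉ C \ ancD)
            ∨ ((f (n - (i + 1)) ∈ pa (f (n - i)) ∧ f (n - (i + 1)) ∉ A) ∧ f (n - i) ∉ C \ ancD)) := by
          intro i hi
          right
          have h1 : n - (i + 1) + 1 = n - i := by omega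
          have he' := he (n - (i + 1)) (by omega)
          rw [h1] at he'
          exact ⟨he', hmid (n - i) (by omega) (by omega)⟩
        obtain ⟨i, hi0, hin, hbl⟩ := hd n (fun k => f (n - k)) (by simpa using hfn)
          (by simpa using (Finset.mem_sdiff.mp hf0).1) hwalk
        rcases hbl with ⟨_, hD⟩ | ⟨hcol, _, _⟩
        · have htg : Relation.TransGen (fun u w : V => u ∈ pa w) (f 0) (f (n - i)) :=
            Relation.TransGen.mono (fun a b hab => hab.1) _ _ (path_tg (fun u v : V => u ∈ pa v ∧ u ∉ A) f (n - i) (by omega)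
              (fun k hk => he k (by omega)))
          exact (Finset.mem_sdiff.mp hf0).2
            ((hanc (f 0)).mpr ⟨f (n - i), Finset.mem_coe.mp hD, htg⟩)
        · have hpa1 : f (n - i) ∈ pa (f (n - i + 1)) := (he (n - i) (by omega)).1
          have h1 : n - (i - 1) = n - i + 1 := by omega
          have hpa2 : f (n - i + 1) ∈ pa (f (n - i)) := by
            have h2 : f (n - (i - 1)) ∈ pa (f (n - i)) := hcol.1.1.1
            rwa [h1] at h2
          exact hacyc (f (n - i))
            (Relation.TransGen.head hpa1 (Relation.TransGen.single hpa2))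
  have noC2B : ∀ j ∈ C \ ancD, ∀ b ∈ B,
      ¬ Relation.TransGen (fun u v : V => u ∈ pa v ∧ u ∉ A) j b := by
    intro j hj b hb htg
    obtain ⟨n, f, hn, h0, hb', he⟩ := tg_path _ htg
    exact nopath n f (by rwa [h0]) (by rwa [hb']) he
  -- conversion of descendants from the (A ∪ C₂)-pruned graph to hd's graph
  have tgconv : ∀ u z : V, z ∈ D →
      Relation.TransGen (fun u v : V => u ∈ pa v ∧ u ∉ A ∪ (C \ ancD)) u z →
      Relation.TransGen (fun u v : V => (u ∈ pa v ∧ u ∉ A) ∧ v ∉ C \ ancD) u z := by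
    intro u z hz htg
    induction htg using Relation.TransGen.head_induction_on with
    | single h =>
      exact Relation.TransGen.single ⟨⟨h.1, fun hA => h.2 (Finset.mem_union_left _ hA)⟩,
        fun hC2 => Finset.disjoint_left.mp hCD (Finset.mem_sdiff.mp hC2).1 hz⟩
    | head h htg' ihh =>
      refine Relation.TransGen.head ⟨⟨h.1, fun hA => h.2 (Finset.mem_union_left _ hA)⟩,
        fun hC2 => ?_⟩ ihh
      exact (Finset.mem_sdiff.mp hC2).2
        ((hanc _).mpr ⟨z, hz, Relation.TransGen.mono (fun a b hab => hab.1) _ _ htg'⟩)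
  -- (a): d-separation of B and C₁ = C ∩ ancD given D in G^{σ(x̃_{A ∪ C₂})}
  have factA : dSep (fun u v : V => u ∈ pa v ∧ u ∉ A ∪ (C \ ancD)) ↑B ↑(C ∩ ancD) ↑D := by
    intro n f hf0 hfn hwalk
    by_cases hmid : ∃ i, 0 < i ∧ i < n ∧ f i ∈ C \ ancD
    · obtain ⟨i, h1, h2, hC2⟩ := hmid
      have hU : f i ∈ A ∪ (C \ ancD) := Finset.mem_union_right _ hC2
      refine ⟨i, h1, h2, Or.inr ⟨⟨?_, ?_⟩, ?_, ?_⟩⟩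
      · rcases hwalk (i - 1) (by omega) with h | h
        · rwa [show i - 1 + 1 = i by omega] at h
        · rw [show i - 1 + 1 = i by omega] at h
          exact absurd hU h.2
      · rcases hwalk i h2 with h | h
        · exact absurd hU h.2
        · exact h
      · exact fun hD =>
          Finset.disjoint_left.mp hCD (Finset.mem_sdiff.mp hC2).1 (Finset.mem_coe.mp hD)
      · intro z hz htg
        exact (Finset.mem_sdiff.mp hC2).2 ((hanc _).mpr ⟨z, Finset.mem_coe.mp hz,
          Relation.TransGen.mono (fun a b hab => hab.1) _ _ htg⟩)
    · push_neg at hmid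
      have hint : ∀ j ≤ n, f j ∉ C \ ancD := by
        intro j hj hC2
        rcases Nat.eq_zero_or_pos j with rfl | hj0
        · exact Finset.disjoint_left.mp hBC (Finset.mem_coe.mp hf0) (Finset.mem_sdiff.mp hC2).1
        · rcases eq_or_lt_of_le hj with rfl | hjn
          · exact (Finset.mem_sdiff.mp hC2).2 (Finset.mem_inter.mp (Finset.mem_coe.mp hfn)).2
          · exact hmid j hj0 hjn hC2
      have hwalk'' : ∀ i < n, (((f i ∈ pa (f (i + 1)) ∧ f i ∉ A) ∧ f (i + 1) ∉ C \ ancD)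
          ∨ ((f (i + 1) ∈ pa (f i) ∧ f (i + 1) ∉ A) ∧ f i ∉ C \ ancD)) := by
        intro i hi
        rcases hwalk i hi with h | h
        · exact Or.inl ⟨⟨h.1, fun hA => h.2 (Finset.mem_union_left _ hA)⟩,
            hint (i + 1) (by omega)⟩
        · exact Or.inr ⟨⟨h.1, fun hA => h.2 (Finset.mem_union_left _ hA)⟩,
            hint i (by omega)⟩
      obtain ⟨i, h1, h2, hbl⟩ := hd n f hf0
        (Finset.mem_coe.mpr (Finset.mem_inter.mp (Finset.mem_coe.mp hfn)).1) hwalk''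
      refine ⟨i, h1, h2, ?_⟩
      rcases hbl with ⟨hnc, hD⟩ | ⟨hc, hnD, hdesc⟩
      · refine Or.inl ⟨fun hcol => hnc
          ⟨⟨⟨hcol.1.1, fun hA => hcol.1.2 (Finset.mem_union_left _ hA)⟩, hint i (by omega)⟩,
           ⟨⟨hcol.2.1, fun hA => hcol.2.2 (Finset.mem_union_left _ hA)⟩, hint i (by omega)⟩⟩, hD⟩
      · refine Or.inr ⟨⟨⟨hc.1.1.1, fun hU => ?_⟩, ⟨hc.2.1.1, fun hU => ?_⟩⟩, hnD,
          fun z hz htg => hdesc z hz (tgconv _ z (Finset.mem_coe.mp hz) htg)⟩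
        · rcases Finset.mem_union.mp hU with h | h
          · exact hc.1.1.2 h
          · exact hint (i - 1) (by omega) h
        · rcases Finset.mem_union.mp hU with h | h
          · exact hc.2.1.2 h
          · exact hint (i + 1) (by omega) h
  have factA2 : dSep (fun u v : V => u ∈ pa v ∧ u ∉ A ∪ C) ↑B ↑(C ∩ ancD) ↑D := by
    refine dSep_anti pa hacyc _ _ (fun u v h => ⟨h.1, fun hU => h.2 ?_⟩)
      (fun u v h => h.1) factA
    rcases Finset.mem_union.mp hU with h' | h'
    · exact Finset.mem_union_left _ h'
    · exact Finset.mem_union_right _ (Finset.mem_sdiff.mp h').1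
  have ci2 := hMarkov (A ∪ C) B (C ∩ ancD) D factA2
  have ci' := hMarkov (A ∪ (C \ ancD)) B (C ∩ ancD) D factA
  set y' : V → Ω := fun j => if j ∈ C ∩ ancD then xt j else y j with hy'
  -- O1 : at points fixing x_{C₁} = x̃_{C₁}, the C₁-intervention is invisible
  have hO1 : ∀ S : Finset V, C ∩ ancD ⊆ S →
      Marg (infoDist q (A ∪ C) xt) S y' = Marg (infoDist q (A ∪ (C \ ancD)) xt) S y' := by
    intro S hS
    refine Marg_congr_event _ _ _ _ (fun x hx => ?_)
    unfold infoDist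
    refine Finset.prod_congr rfl fun v _ => ?_
    congr 1
    funext j
    by_cases hj2 : j ∈ A ∪ C
    · rw [if_pos hj2]
      by_cases hj : j ∈ A ∪ (C \ ancD)
      · rw [if_pos hj]
      · rw [if_neg hj]
        have hj1 : j ∈ C ∩ ancD := by
          rcases Finset.mem_union.mp hj2 with h | h
          · exact absurd (Finset.mem_union_left _ h) hj
          · refine Finset.mem_inter.mpr ⟨h, ?_⟩
            by_contra hna
            exact hj (Finset.mem_union_right _ (Finset.mem_sdiff.mpr ⟨h, hna⟩))
        have hxj := hx j (hS hj1)
        have hyj : y' j = xt j := by rw [hy']; exact if_pos hj1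
        rw [hxj, hyj]
    · rw [if_neg hj2, if_neg (fun h => hj2 (by
        rcases Finset.mem_union.mp h with h' | h'
        · exact Finset.mem_union_left _ h'
        · exact Finset.mem_union_right _ (Finset.mem_sdiff.mp h').1))]
  -- O2 : an intervention on C₂ is invisible for marginals over sets with no
  -- C₂-vertex among their (pruned-graph) ancestors
  have hO2 : ∀ (S₀ S : Finset V), S ⊆ S₀ →
      (∀ j ∈ C \ ancD, j ∉ S₀ ∧ ∀ w ∈ S₀,
        ¬ Relation.TransGen (fun u v : V => u ∈ pa v ∧ u ∉ A) j w) →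
      ∀ z : V → Ω,
        Marg (infoDist q A xt) S z = Marg (infoDist q (A ∪ (C \ ancD)) xt) S z := by
    intro S₀ S hSS hC2h z
    have hmemT : ∀ v : V, v ∈ S₀ ∪ Finset.univ.filter
        (fun v => ∃ w ∈ S₀, Relation.TransGen (fun u v : V => u ∈ pa v ∧ u ∉ A) v w)
        ↔ (v ∈ S₀ ∨ ∃ w ∈ S₀, Relation.TransGen (fun u v : V => u ∈ pa v ∧ u ∉ A) v w) := by
      intro v; simp [Finset.mem_union, Finset.mem_filter]
    set T := S₀ ∪ Finset.univ.filter
      (fun v => ∃ w ∈ S₀, Relation.TransGen (fun u v : V => u ∈ pa v ∧ u ∉ A) v w) with hT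
    have hclose : ∀ v ∈ T, ∀ j ∈ pa v, j ∉ A → j ∈ T := by
      intro v hv j hj hjA
      rcases (hmemT v).mp hv with h | ⟨w, hw, htg⟩
      · exact (hmemT j).mpr (Or.inr ⟨v, h, Relation.TransGen.single ⟨hj, hjA⟩⟩)
      · exact (hmemT j).mpr (Or.inr ⟨w, hw, Relation.TransGen.head ⟨hj, hjA⟩ htg⟩)
    refine marg_eq_of pa q xt z hloc hnorm hacyc A (A ∪ (C \ ancD)) S T
      (hSS.trans Finset.subset_union_left) hclose ?_
    intro v hv j hj
    constructor
    · exact fun h => Finset.mem_union_left _ h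
    · intro h
      rcases Finset.mem_union.mp h with h' | h'
      · exact h'
      · by_contra hjA
        have hjT : j ∈ T := hclose v hv j hj hjA
        rcases (hmemT j).mp hjT with h'' | ⟨w, hw, htg⟩
        · exact absurd h'' (hC2h j h').1
        · exact (hC2h j h').2 w hw htg
  have hBD' : ∀ j ∈ C \ ancD, j ∉ B ∪ D ∧ ∀ w ∈ B ∪ D,
      ¬ Relation.TransGen (fun u v : V => u ∈ pa v ∧ u ∉ A) j w := by
    intro j hj
    have hjC : j ∈ C := (Finset.mem_sdiff.mp hj).1
    constructor
    · intro hmem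
      rcases Finset.mem_union.mp hmem with h | h
      · exact Finset.disjoint_left.mp hBC h hjC
      · exact Finset.disjoint_left.mp hCD hjC h
    · intro w hw htg
      rcases Finset.mem_union.mp hw with h | h
      · exact noC2B j hj w h htg
      · exact (Finset.mem_sdiff.mp hj).2
          ((hanc j).mpr ⟨w, h, Relation.TransGen.mono (fun a b hab => hab.1) _ _ htg⟩)
  have hC1D' : ∀ j ∈ C \ ancD, j ∉ (C ∩ ancD) ∪ D ∧ ∀ w ∈ (C ∩ ancD) ∪ D,
      ¬ Relation.TransGen (fun u v : V => u ∈ pa v ∧ u ∉ A) j w := by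
    intro j hj
    constructor
    · intro hmem
      rcases Finset.mem_union.mp hmem with h | h
      · exact (Finset.mem_sdiff.mp hj).2 (Finset.mem_inter.mp h).2
      · exact Finset.disjoint_left.mp hCD (Finset.mem_sdiff.mp hj).1 h
    · intro w hw htg
      have htg' : Relation.TransGen (fun u w : V => u ∈ pa w) j w := Relation.TransGen.mono (fun a b hab => (hab : a ∈ pa b ∧ a ∉ A).1) _ _ htg
      rcases Finset.mem_union.mp hw with h | h
      · obtain ⟨dd, hdd, htgw⟩ := (hanc w).mp (Finset.mem_inter.mp h).2
        exact (Finset.mem_sdiff.mp hj).2 ((hanc j).mpr ⟨dd, hdd, htg'.trans htgw⟩)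
      · exact (Finset.mem_sdiff.mp hj).2 ((hanc j).mpr ⟨w, h, htg'⟩)
  -- point agreements
  have hyy' : ∀ i ∈ B ∪ D, y i = y' i := by
    intro i hi
    have hiC : i ∉ C ∩ ancD := by
      intro hiC
      rcases Finset.mem_union.mp hi with h | h
      · exact Finset.disjoint_left.mp hBC h (Finset.mem_inter.mp hiC).1
      · exact Finset.disjoint_left.mp hCD (Finset.mem_inter.mp hiC).1 h
    rw [hy']
    exact (if_neg hiC).symm
  have hyD : ∀ i ∈ D, y i = y' i := fun i hi => hyy' i (Finset.mem_union_right _ hi)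
  have k1 := ci2 y'
  have k2 := ci' y'
  rw [← Marg_congr_point (infoDist q (A ∪ C) xt) (B ∪ D) hyy',
      ← Marg_congr_point (infoDist q (A ∪ C) xt) D hyD] at k1
  rw [← Marg_congr_point (infoDist q (A ∪ (C \ ancD)) xt) (B ∪ D) hyy',
      ← Marg_congr_point (infoDist q (A ∪ (C \ ancD)) xt) D hyD] at k2
  have e1 : Marg (infoDist q (A ∪ C) xt) (B ∪ (C ∩ ancD) ∪ D) y'
      = Marg (infoDist q (A ∪ (C \ ancD)) xt) (B ∪ (C ∩ ancD) ∪ D) y' :=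
    hO1 _ (Finset.subset_union_right.trans Finset.subset_union_left)
  have e2 : Marg (infoDist q (A ∪ C) xt) ((C ∩ ancD) ∪ D) y'
      = Marg (infoDist q (A ∪ (C \ ancD)) xt) ((C ∩ ancD) ∪ D) y' :=
    hO1 _ Finset.subset_union_left
  have e3 := hO2 (B ∪ D) (B ∪ D) (Finset.Subset.refl _) hBD' y
  have e4 := hO2 (B ∪ D) D Finset.subset_union_right hBD' y
  have e5 := hO2 ((C ∩ ancD) ∪ D) ((C ∩ ancD) ∪ D) (Finset.Subset.refl _) hC1D' y'
  have hd' : Marg (infoDist q (A ∪ (C \ ancD)) xt) D y ≠ 0 := by rw [← e4]; exact hpos2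
  have hR' : Marg (infoDist q (A ∪ (C \ ancD)) xt) ((C ∩ ancD) ∪ D) y' ≠ 0 := by
    rw [← e5]; exact hpos3
  rw [e3, e4, div_eq_div_iff hpos1 hd']
  refine mul_right_cancel₀ hR' ?_
  linear_combination (-(Marg (infoDist q (A ∪ (C \ ancD)) xt) D y)) * k1
    + (Marg (infoDist q (A ∪ C) xt) D y) * k2
    + (Marg (infoDist q (A ∪ C) xt) D y) * (Marg (infoDist q (A ∪ (C \ ancD)) xt) D y) * e1
    + (-(Marg (infoDist q (A ∪ C) xt) (B ∪ D) y
        * Marg (infoDist q (A ∪ (C \ ancD)) xt) D y)) * e2
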